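/- For n ≥ 2, the sum over all derangements σ of [n] of (-1)^{cyc(σ)} x^{exc(σ)} equals -(x + x² + ⋯ + x^{n-1}). -/

import Mathlib

open Finset

/-- Number of cycles of a permutation (counting fixed points as 1-cycles). -/
def cyc {n : ℕ} (σ : Equiv.Perm (Fin n)) : ℕ :=
  σ.cycleType.card + (Finset.univ.filter fun i => σ i = i).card

/-- Set of excedance indices of a permutation. -/
def excIdx {n : ℕ} (σ : Equiv.Perm (Fin n)) : Finset (Fin n) :=
  Finset.univ.filter fun i => i < σ i

section Aux

variable {R : Type*} [CommRing R]

def Lb (n : ℕ) (x : R) : Matrix (Fin n) (Fin n) R :=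
  Matrix.of fun i j => if (j:ℕ) = i then -x else if (j:ℕ)+1 = i then 1 else 0

def Bp (n : ℕ) (x : R) : Matrix (Fin n) (Fin n) R :=
  Matrix.of fun i j =>
    if (i:ℕ) = 0 then x else if (j:ℕ) = i then -x else if (j:ℕ)+1 = i then 1 else 0

def Bm (n : ℕ) (x : R) : Matrix (Fin n) (Fin n) R :=
  Matrix.of fun i j =>
    if (i:ℕ) = 0 then (if (j:ℕ) = 0 then 0 else x)
    else if (j:ℕ) = i then -x else if (j:ℕ)+1 = i then 1 else 0

lemma det_Lb (n : ℕ) (x : R) : (Lb n x).det = (-x)^n := by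
  rw [Matrix.det_of_lowerTriangular]
  · simp [Lb]
  · intro i j h
    simp only [Lb, Matrix.of_apply]
    have : (i:ℕ) < j := h
    split_ifs <;> first | omega | rfl

lemma submatrix_Bp_zero (n : ℕ) (x : R) :
    (Bp (n+2) x).submatrix (Fin.succAbove 0) Fin.succ = Lb (n+1) x := by
  ext i j
  have hi := i.isLt; have hj := j.isLt
  simp only [Matrix.submatrix_apply, Fin.succAbove_zero, Bp, Lb, Matrix.of_apply, Fin.val_succ]
  split_ifs <;> first | rfl | exact False.elim (by assumption) | (exfalso; omega)

lemma submatrix_Bp_one (n : ℕ) (x : R) :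
    (Bp (n+2) x).submatrix (Fin.succAbove 1) Fin.succ = Bp (n+1) x := by
  ext i j
  have hj := j.isLt
  induction i using Fin.cases with
  | zero =>
      have h0 : (1 : Fin (n+2)).succAbove 0 = 0 := rfl
      simp only [Matrix.submatrix_apply, h0, Bp, Matrix.of_apply, Fin.val_zero, Fin.val_succ]
      split_ifs <;> first | rfl | exact False.elim (by assumption) | (exfalso; omega)
  | succ k =>
      have hk := k.isLt
      have h1 : (1 : Fin (n+2)).succAbove k.succ = k.succ.succ := by
        rw [Fin.succAbove_of_le_castSucc]
        rw [Fin.le_def]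
        simp [Fin.val_one]
      simp only [Matrix.submatrix_apply, h1, Bp, Matrix.of_apply, Fin.val_succ]
      split_ifs <;> first | rfl | exact False.elim (by assumption) | (exfalso; omega)

lemma det_Bp (n : ℕ) (x : R) :
    (Bp (n+1) x).det = (-1)^n * ∑ k ∈ Icc 1 (n+1), x^k := by
  induction n with
  | zero => simp [Bp, Matrix.det_fin_one]
  | succ m ih =>
      rw [show m+1+1 = (m+1)+1 from rfl, Matrix.det_succ_column_zero]
      rw [Fin.sum_univ_succ, Fin.sum_univ_succ]
      simp only [Fin.succ_zero_eq_one]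
      rw [submatrix_Bp_zero, submatrix_Bp_one, det_Lb, ih]
      have htail : ∀ i : Fin m, (-1:R) ^ ((i.succ.succ : Fin (m+2)) : ℕ) *
          Bp (m+2) x i.succ.succ 0 *
          ((Bp (m+2) x).submatrix (Fin.succAbove i.succ.succ) Fin.succ).det = 0 := by
        intro i
        have hz : Bp (m+2) x i.succ.succ 0 = 0 := by
          simp only [Bp, Matrix.of_apply, Fin.val_succ, Fin.val_zero]
          split_ifs <;> first | rfl | exact False.elim (by assumption) | (exfalso; omega)
        rw [hz]; ring
      rw [Finset.sum_congr rfl (fun i _ => htail i), Finset.sum_const_zero]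
      have h00 : Bp (m+2) x 0 0 = x := rfl
      have h10 : Bp (m+2) x 1 0 = 1 := rfl
      rw [h00, h10]
      rw [Finset.sum_Icc_succ_top (by omega : 1 ≤ m+1+1)]
      simp only [Fin.val_zero, Fin.val_one]
      push_cast
      ring

lemma submatrix_Bm_one (n : ℕ) (x : R) :
    (Bm (n+2) x).submatrix (Fin.succAbove 1) Fin.succ = Bp (n+1) x := by
  ext i j
  have hj := j.isLt
  induction i using Fin.cases with
  | zero =>
      have h0 : (1 : Fin (n+2)).succAbove 0 = 0 := rfl
      simp only [Matrix.submatrix_apply, h0, Bm, Bp, Matrix.of_apply, Fin.val_zero, Fin.val_succ]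
      split_ifs <;> first | rfl | exact False.elim (by assumption) | (exfalso; omega)
  | succ k =>
      have hk := k.isLt
      have h1 : (1 : Fin (n+2)).succAbove k.succ = k.succ.succ := by
        rw [Fin.succAbove_of_le_castSucc]
        rw [Fin.le_def]
        simp [Fin.val_one]
      simp only [Matrix.submatrix_apply, h1, Bm, Bp, Matrix.of_apply, Fin.val_succ]
      split_ifs <;> first | rfl | exact False.elim (by assumption) | (exfalso; omega)

lemma det_Bm (n : ℕ) (x : R) :
    (Bm (n+2) x).det = (-1)^(n+1) * ∑ k ∈ Icc 1 (n+1), x^k := by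
  rw [show n+2 = (n+1)+1 from rfl, Matrix.det_succ_column_zero]
  rw [Fin.sum_univ_succ, Fin.sum_univ_succ]
  simp only [Fin.succ_zero_eq_one]
  rw [submatrix_Bm_one, det_Bp]
  have htail : ∀ i : Fin n, (-1:R) ^ ((i.succ.succ : Fin (n+2)) : ℕ) *
      Bm (n+2) x i.succ.succ 0 *
      ((Bm (n+2) x).submatrix (Fin.succAbove i.succ.succ) Fin.succ).det = 0 := by
    intro i
    have hz : Bm (n+2) x i.succ.succ 0 = 0 := by
      simp only [Bm, Matrix.of_apply, Fin.val_succ, Fin.val_zero]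
      split_ifs <;> first | rfl | exact False.elim (by assumption) | (exfalso; omega)
    rw [hz]; ring
  rw [Finset.sum_congr rfl (fun i _ => htail i), Finset.sum_const_zero]
  have h00 : Bm (n+2) x 0 0 = 0 := rfl
  have h10 : Bm (n+2) x 1 0 = 1 := rfl
  rw [h00, h10]
  simp only [Fin.val_zero, Fin.val_one]
  ring

/-- The row-operation matrix: identity with `-1` on the subdiagonal. -/
def Pm (n : ℕ) : Matrix (Fin n) (Fin n) R :=
  Matrix.of fun i k => if (k:ℕ) = i then 1 else if (k:ℕ)+1 = i then -1 else 0

lemma det_Pm (n : ℕ) : (Pm n : Matrix (Fin n) (Fin n) R).det = 1 := by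
  rw [Matrix.det_of_lowerTriangular]
  · simp [Pm]
  · intro i j h
    simp only [Pm, Matrix.of_apply]
    have : (i:ℕ) < j := h
    split_ifs <;> first | omega | rfl

/-- The "derangement" matrix: `0` on diagonal, `x` above, `1` below. -/
def Dm (n : ℕ) (x : R) : Matrix (Fin n) (Fin n) R :=
  Matrix.of fun i j => if (i:ℕ) = j then 0 else if (i:ℕ) < j then x else 1

lemma Pm_mul_Dm (n : ℕ) (x : R) : Pm (n+1) * Dm (n+1) x = Bm (n+1) x := by
  ext i j
  rw [Matrix.mul_apply]
  have hsplit : ∀ k : Fin (n+1), Pm (n+1) i k * Dm (n+1) x k j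
      = (if k = i then Dm (n+1) x k j else 0)
        + (if (k:ℕ)+1 = (i:ℕ) then -(Dm (n+1) x k j) else 0) := by
    intro k
    simp only [Pm, Matrix.of_apply, Fin.ext_iff]
    split_ifs <;> first | ring1 | (exfalso; omega)
  rw [Finset.sum_congr rfl (fun k _ => hsplit k), Finset.sum_add_distrib]
  rw [Finset.sum_ite_eq' univ i (fun k => Dm (n+1) x k j), if_pos (mem_univ i)]
  have hj := j.isLt
  induction i using Fin.cases with
  | zero =>
      have h2 : ∀ k : Fin (n+1),
          (if (k:ℕ)+1 = ((0:Fin (n+1)):ℕ) then -(Dm (n+1) x k j) else 0) = 0 := by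
        intro k
        rw [if_neg]; simp
      rw [Finset.sum_congr rfl (fun k _ => h2 k), Finset.sum_const_zero, add_zero]
      simp only [Dm, Bm, Matrix.of_apply, Fin.val_zero]
      by_cases hj0 : (j:ℕ) = 0
      · simp [hj0]
      · simp [hj0, Ne.symm hj0, Nat.pos_of_ne_zero hj0]
  | succ m =>
      have hm := m.isLt
      have h2 : ∀ k : Fin (n+1),
          (if (k:ℕ)+1 = ((m.succ : Fin (n+1)):ℕ) then -(Dm (n+1) x k j) else 0)
          = (if k = m.castSucc then -(Dm (n+1) x k j) else 0) := by
        intro k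
        refine if_congr ?_ rfl rfl
        rw [Fin.ext_iff]
        simp only [Fin.val_succ, Fin.coe_castSucc]
        omega
      rw [Finset.sum_congr rfl (fun k _ => h2 k),
        Finset.sum_ite_eq' univ m.castSucc (fun k => -(Dm (n+1) x k j)),
        if_pos (mem_univ _)]
      simp only [Dm, Bm, Matrix.of_apply, Fin.val_succ, Fin.coe_castSucc]
      split_ifs <;> first | ring1 | exact False.elim (by assumption) | (exfalso; omega)

lemma det_Dm (n : ℕ) (x : R) :
    (Dm (n+2) x).det = (-1)^(n+1) * ∑ k ∈ Icc 1 (n+1), x^k := by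
  have h : (Pm (n+2) : Matrix (Fin (n+2)) (Fin (n+2)) R).det * (Dm (n+2) x).det
      = (Bm (n+2) x).det := by
    rw [← Matrix.det_mul, Pm_mul_Dm]
  rw [det_Pm, one_mul] at h
  rw [h, det_Bm]


end Aux

theorem stmt0 {R : Type*} [CommRing R] (x : R) (n : ℕ) (hn : 2 ≤ n) :
    ∑ σ ∈ Finset.univ.filter (fun σ : Equiv.Perm (Fin n) => ∀ i, σ i ≠ i),
      (-1 : R) ^ cyc σ * x ^ (excIdx σ).card
    = -(∑ k ∈ Finset.Icc 1 (n - 1), x ^ k) := by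
  obtain ⟨m, rfl⟩ : ∃ m, n = m + 2 := ⟨n - 2, by omega⟩
  have key : (Dm (m+2) x).det
      = ∑ σ ∈ Finset.univ.filter (fun σ : Equiv.Perm (Fin (m+2)) => ∀ i, σ i ≠ i),
        ((Equiv.Perm.sign σ : ℤ) : R) * x ^ (excIdx σ).card := by
    rw [← Matrix.det_transpose, Matrix.det_apply']
    rw [← Finset.sum_filter_add_sum_filter_not Finset.univ
      (fun σ : Equiv.Perm (Fin (m+2)) => ∀ i, σ i ≠ i)]
    have hbad : ∑ σ ∈ Finset.univ.filter
        (fun σ : Equiv.Perm (Fin (m+2)) => ¬ ∀ i, σ i ≠ i),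
        ((Equiv.Perm.sign σ : ℤ) : R) * ∏ i, (Dm (m+2) x).transpose (σ i) i = 0 := by
      refine Finset.sum_eq_zero fun σ hσ => ?_
      rw [Finset.mem_filter] at hσ
      push_neg at hσ
      obtain ⟨i₀, hi₀⟩ := hσ.2
      have : (Dm (m+2) x).transpose (σ i₀) i₀ = 0 := by
        rw [Matrix.transpose_apply, hi₀]
        simp [Dm]
      exact mul_eq_zero_of_right _ (Finset.prod_eq_zero (Finset.mem_univ i₀) this)
    rw [hbad, add_zero]
    refine Finset.sum_congr rfl fun σ hσ => ?_
    rw [Finset.mem_filter] at hσ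
    congr 1
    have hprod : ∀ i : Fin (m+2), (Dm (m+2) x).transpose (σ i) i
        = if i < σ i then x else 1 := by
      intro i
      rw [Matrix.transpose_apply]
      simp only [Dm, Matrix.of_apply]
      have hne : (i:ℕ) ≠ (σ i : ℕ) := fun h => hσ.2 i (Fin.ext h.symm)
      simp only [Fin.lt_def]
      split_ifs <;> first | rfl | (exfalso; omega)
    rw [Finset.prod_congr rfl (fun i _ => hprod i)]
    rw [Finset.prod_ite, Finset.prod_const_one, mul_one, Finset.prod_const]
    rfl
  have hsign : ∀ σ ∈ Finset.univ.filter
      (fun σ : Equiv.Perm (Fin (m+2)) => ∀ i, σ i ≠ i),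
      (-1 : R) ^ cyc σ = (-1)^(m+2) * ((Equiv.Perm.sign σ : ℤ) : R) := by
    intro σ hσ
    rw [Finset.mem_filter] at hσ
    have hfix : (Finset.univ.filter fun i => σ i = i) = ∅ := by
      refine Finset.filter_eq_empty_iff.mpr fun i _ => hσ.2 i
    have hsupp : σ.support = Finset.univ := by
      ext i; simp [Equiv.Perm.mem_support, hσ.2 i]
    have hsum : σ.cycleType.sum = m + 2 := by
      rw [Equiv.Perm.sum_cycleType, hsupp, Finset.card_univ, Fintype.card_fin]
    have hcyc : cyc σ = Multiset.card σ.cycleType := by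
      rw [cyc, hfix]; simp
    rw [hcyc, Equiv.Perm.sign_of_cycleType, hsum]
    push_cast
    rw [← pow_add]
    have he : m + 2 + (m + 2 + Multiset.card σ.cycleType)
        = 2*(m+2) + Multiset.card σ.cycleType := by ring
    rw [he, pow_add, pow_mul, neg_one_sq, one_pow, one_mul]
  calc ∑ σ ∈ Finset.univ.filter (fun σ : Equiv.Perm (Fin (m+2)) => ∀ i, σ i ≠ i),
      (-1 : R) ^ cyc σ * x ^ (excIdx σ).card
      = ∑ σ ∈ Finset.univ.filter (fun σ : Equiv.Perm (Fin (m+2)) => ∀ i, σ i ≠ i),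
        (-1:R)^(m+2) * (((Equiv.Perm.sign σ : ℤ) : R) * x ^ (excIdx σ).card) := by
        refine Finset.sum_congr rfl fun σ hσ => ?_
        rw [hsign σ hσ]; ring
    _ = (-1:R)^(m+2) * (Dm (m+2) x).det := by
        rw [← Finset.mul_sum, key]
    _ = -(∑ k ∈ Finset.Icc 1 (m+1), x ^ k) := by
        rw [det_Dm, ← mul_assoc, ← pow_add]
        have he : m + 2 + (m + 1) = 2*(m+1) + 1 := by ring
        rw [he, pow_add, pow_mul, neg_one_sq, one_pow, pow_one, one_mul, neg_one_mul]
    _ = -(∑ k ∈ Finset.Icc 1 (m+2-1), x ^ k) := by norm_num
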